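/- Let H be a separable real Hilbert space, let u₀, w₀ ∈ H and b ∈ ℝ. Define f : H → H by f(u) = u + tanh(⟨w₀, u⟩ + b)·u₀. Then f is Fréchet differentiable at every u ∈ H with derivative Df(u)(v) = v + (1 − tanh(⟨w₀, u⟩ + b)²)·⟨w₀, v⟩·u₀, and if moreover ⟨u₀, w₀⟩ > −1, then for every u ∈ H every real eigenvalue of the bounded linear operator Df(u) is strictly positive. -/

import Mathlib

open scoped RealInnerProductSpace

lemma tanh_hasDerivAt (x : ℝ) : HasDerivAt Real.tanh (1 - Real.tanh x ^ 2) x := by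
  have hc : Real.cosh x ≠ 0 := (Real.cosh_pos x).ne'
  have h := (Real.hasDerivAt_sinh x).div (Real.hasDerivAt_cosh x) hc
  have heq : (fun y => Real.sinh y / Real.cosh y) = Real.tanh := by
    funext y; rw [Real.tanh_eq_sinh_div_cosh]
  rw [show (Real.sinh / Real.cosh) = Real.tanh from heq] at h
  refine h.congr_deriv ?_
  rw [Real.tanh_eq_sinh_div_cosh]
  have h1 := Real.cosh_sq_sub_sinh_sq x
  field_simp

lemma tanh_sq_lt_one (x : ℝ) : Real.tanh x ^ 2 < 1 := by
  have hc : (0:ℝ) < Real.cosh x := Real.cosh_pos x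
  rw [Real.tanh_eq_sinh_div_cosh, div_pow, div_lt_one (by positivity)]
  have := Real.cosh_sq_sub_sinh_sq x
  nlinarith

/-- The functional planar flow layer `f(u) = u + tanh(⟨w₀,u⟩ + b) u₀` is
Fréchet differentiable with derivative `Df(u) v = v + (1 − tanh(⟨w₀,u⟩+b)²) ⟨w₀,v⟩ u₀`, and
if `⟨u₀,w₀⟩ > −1`, every real eigenvalue of `Df(u)` is strictly positive. -/
theorem stmt_6 {H : Type*} [NormedAddCommGroup H] [InnerProductSpace ℝ H]
    [CompleteSpace H] [TopologicalSpace.SeparableSpace H]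
    (u₀ w₀ : H) (b : ℝ) :
    (∀ u : H,
      HasFDerivAt (fun u : H => u + Real.tanh (⟪w₀, u⟫ + b) • u₀)
        (ContinuousLinearMap.id ℝ H +
          (1 - Real.tanh (⟪w₀, u⟫ + b) ^ 2) • (innerSL ℝ w₀).smulRight u₀) u) ∧
    (⟪u₀, w₀⟫ > -1 → ∀ (u : H) (lam : ℝ) (v : H), v ≠ 0 →
      (ContinuousLinearMap.id ℝ H +
        (1 - Real.tanh (⟪w₀, u⟫ + b) ^ 2) • (innerSL ℝ w₀).smulRight u₀) v = lam • v →
      0 < lam) := by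
  constructor
  · intro u
    have hg : HasFDerivAt (fun u : H => ⟪w₀, u⟫ + b) (innerSL ℝ w₀) u := by
      simpa using ((innerSL ℝ w₀).hasFDerivAt.add_const b)
    have ht : HasFDerivAt (fun u : H => Real.tanh (⟪w₀, u⟫ + b))
        ((1 - Real.tanh (⟪w₀, u⟫ + b) ^ 2) • (innerSL ℝ w₀)) u :=
      by have := (tanh_hasDerivAt (⟪w₀, u⟫ + b)).comp_hasFDerivAt u hg; exact this
    have h := (hasFDerivAt_id u).add (ht.smul_const u₀)
    convert h using 1
    ext v
    simp [ContinuousLinearMap.smul_apply, smul_smul, mul_comm]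
    ext v
    simp [ContinuousLinearMap.smul_apply, smul_smul, mul_comm]
  · intro hpos u lam v hv heq
    set c : ℝ := 1 - Real.tanh (⟪w₀, u⟫ + b) ^ 2 with hc
    have hc0 : 0 < c := by have := tanh_sq_lt_one (⟪w₀, u⟫ + b); linarith
    have hc1 : c ≤ 1 := by nlinarith [sq_nonneg (Real.tanh (⟪w₀, u⟫ + b))]
    have heq' : v + c • (⟪w₀, v⟫ • u₀) = lam • v := by
      simpa [ContinuousLinearMap.add_apply, ContinuousLinearMap.smul_apply,
        smul_smul] using heq
    by_cases hw : ⟪w₀, v⟫ = 0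
    · have : v = lam • v := by simpa [hw] using heq'
      have h1 : (1 - lam) • v = 0 := by
        rw [sub_smul, one_smul, sub_eq_zero]; exact this
      rcases smul_eq_zero.mp h1 with h | h
      · linarith [sub_eq_zero.mp h]
      · exact absurd h hv
    · have hinner : ⟪w₀, v⟫ + c * (⟪w₀, v⟫ * ⟪w₀, u₀⟫) = lam * ⟪w₀, v⟫ := by
        have := congrArg (fun x => ⟪w₀, x⟫) heq'
        simpa [inner_add_right, inner_smul_right, mul_assoc] using this
      have hlam : lam = 1 + c * ⟪w₀, u₀⟫ := by
        have h2 : ⟪w₀, v⟫ * (1 + c * ⟪w₀, u₀⟫ - lam) = 0 := by linear_combination hinner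
        rcases mul_eq_zero.mp h2 with h | h
        · exact absurd h hw
        · linarith
      have hwu : ⟪w₀, u₀⟫ > -1 := by rwa [real_inner_comm] at hpos
      nlinarith [mul_pos hc0 (by linarith : ⟪w₀, u₀⟫ + 1 > 0)]
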